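/- Let g : ℝ → ℝ be defined by g(y) = sin(2y)/(2y) for y ≠ 0 and g(0) = 1. Then for all y, z ∈ ℝ, |g(y) − g(z)| ≤ (4/3)·max{|y|, |z|}·|y − z|. -/

import Mathlib

open Real intervalIntegral

/-- `g(y) = sin(2y)/(2y)` for `y ≠ 0`, `g(0) = 1`. -/
noncomputable def gfun (y : ℝ) : ℝ := if y = 0 then 1 else Real.sin (2 * y) / (2 * y)

lemma gfun_eq (y : ℝ) : gfun y = ∫ t in (0:ℝ)..1, Real.cos (2 * y * t) := by
  by_cases hy : y = 0
  · simp [gfun, hy]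
  · have h2y : (2 * y) ≠ 0 := by simpa using hy
    rw [show (fun t : ℝ => Real.cos (2 * y * t)) = fun t : ℝ => Real.cos ((2*y) * t) from rfl]
    rw [intervalIntegral.integral_comp_mul_left Real.cos h2y]
    simp [gfun, hy, integral_cos, smul_eq_mul, div_eq_inv_mul]

/-- `|g(y) − g(z)| ≤ (4/3)·max{|y|,|z|}·|y − z|` for all `y, z ∈ ℝ`. -/
theorem stmt11 : ∀ y z : ℝ, |gfun y - gfun z| ≤ 4 / 3 * max |y| |z| * |y - z| := by
  intro y z
  set M := max |y| |z| with hM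
  have hMy : |y| ≤ M := le_max_left _ _
  have hMz : |z| ≤ M := le_max_right _ _
  have hint : ∀ w : ℝ, IntervalIntegrable (fun t => Real.cos (2 * w * t)) MeasureTheory.volume 0 1 :=
    fun w => (Real.continuous_cos.comp (continuous_const.mul continuous_id)).intervalIntegrable _ _
  have hsub : gfun y - gfun z = ∫ t in (0:ℝ)..1, (Real.cos (2 * y * t) - Real.cos (2 * z * t)) := by
    rw [gfun_eq, gfun_eq, intervalIntegral.integral_sub (hint y) (hint z)]
  rw [hsub]
  have hbound : ∀ t ∈ Set.uIoc (0:ℝ) 1,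
      ‖Real.cos (2 * y * t) - Real.cos (2 * z * t)‖ ≤ 4 * M * |y - z| * t ^ 2 := by
    intro t ht
    rw [Set.uIoc_of_le (by norm_num : (0:ℝ) ≤ 1)] at ht
    have ht0 : 0 < t := ht.1
    have ht1 : t ≤ 1 := ht.2
    rw [Real.cos_sub_cos]
    have e1 : (2 * y * t + 2 * z * t) / 2 = t * (y + z) := by ring
    have e2 : (2 * y * t - 2 * z * t) / 2 = t * (y - z) := by ring
    rw [e1, e2, Real.norm_eq_abs]
    have habsrw : |-2 * Real.sin (t * (y + z)) * Real.sin (t * (y - z))| =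
        2 * |Real.sin (t * (y + z))| * |Real.sin (t * (y - z))| := by
      rw [abs_mul, abs_mul]; norm_num
    rw [habsrw]
    have h1 : |Real.sin (t * (y + z))| ≤ t * |y + z| := by
      calc |Real.sin (t * (y + z))| ≤ |t * (y + z)| := Real.abs_sin_le_abs
        _ = t * |y + z| := by rw [abs_mul, abs_of_pos ht0]
    have h2 : |Real.sin (t * (y - z))| ≤ t * |y - z| := by
      calc |Real.sin (t * (y - z))| ≤ |t * (y - z)| := Real.abs_sin_le_abs
        _ = t * |y - z| := by rw [abs_mul, abs_of_pos ht0]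
    have hyz : |y + z| ≤ 2 * M := by
      calc |y + z| ≤ |y| + |z| := abs_add_le _ _
        _ ≤ M + M := add_le_add hMy hMz
        _ = 2 * M := by ring
    calc 2 * |Real.sin (t * (y + z))| * |Real.sin (t * (y - z))|
        ≤ 2 * (t * |y + z|) * (t * |y - z|) := by
          apply mul_le_mul
          · exact mul_le_mul_of_nonneg_left h1 (by norm_num)
          · exact h2
          · exact abs_nonneg _
          · positivity
      _ = 2 * |y + z| * |y - z| * t ^ 2 := by ring
      _ ≤ 2 * (2 * M) * |y - z| * t ^ 2 := by
          have : (0:ℝ) ≤ |y - z| * t ^ 2 := by positivity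
          nlinarith [abs_nonneg (y - z), sq_nonneg t, mul_nonneg (mul_nonneg (sub_nonneg.mpr hyz) (abs_nonneg (y-z))) (sq_nonneg t)]
      _ = 4 * M * |y - z| * t ^ 2 := by ring
  have hgint : IntervalIntegrable (fun t : ℝ => 4 * M * |y - z| * t ^ 2) MeasureTheory.volume 0 1 :=
    (continuous_const.mul (continuous_pow 2)).intervalIntegrable _ _
  have := intervalIntegral.norm_integral_le_of_norm_le
    (f := fun t => Real.cos (2 * y * t) - Real.cos (2 * z * t))
    (μ := MeasureTheory.volume) (a := 0) (b := 1) zero_le_one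
    (Filter.Eventually.of_forall (fun t ht => hbound t (by rwa [Set.uIoc_of_le zero_le_one]))) hgint
  rw [Real.norm_eq_abs] at this
  refine this.trans ?_
  have hcalc : ∫ t in (0:ℝ)..1, 4 * M * |y - z| * t ^ 2 = 4 / 3 * M * |y - z| := by
    rw [intervalIntegral.integral_const_mul, integral_pow]
    norm_num; ring
  rw [hcalc]
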